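/- Let X₁, …, X_N be independent random variables and Z = f(X₁, …, X_N) with E[Z²] < ∞. Define V₊ = Σ_{n=1}^N E'[(Z − Z'_n)₊²] where Z'_n is obtained by replacing X_n with an independent copy X'_n and E' is expectation over the copies only. Then Var(Z) ≤ E[V₊] + E[V₋] where V₋ = Σ_n E'[(Z − Z'_n)₋²]; in particular Var(Z) ≤ Σ_n E[(Z − Z'_n)²] (the Efron–Stein inequality). -/

import Mathlib

open MeasureTheory ProbabilityTheory Set

namespace EfronSteinAux

variable {𝒳 : Type*} [MeasurableSpace 𝒳] {N : ℕ}

/-- take first `n` coordinates from `p.1`, the rest from `p.2` -/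
def merge (n : ℕ) (p : (Fin N → 𝒳) × (Fin N → 𝒳)) : Fin N → 𝒳 :=
  fun i => if (i : ℕ) < n then p.1 i else p.2 i

lemma measurable_merge (n : ℕ) : Measurable (merge (N := N) (𝒳 := 𝒳) n) := by
  apply measurable_pi_lambda
  intro i
  by_cases h : (i : ℕ) < n
  · simpa [merge, h, Function.comp_def] using (measurable_pi_apply i).comp measurable_fst
  · simpa [merge, h, Function.comp_def] using (measurable_pi_apply i).comp measurable_snd

lemma merge_preimage (n : ℕ) (s : Fin N → Set 𝒳) :
    merge n ⁻¹' Set.pi univ s =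
      (Set.pi univ fun i : Fin N => if (i : ℕ) < n then s i else univ) ×ˢ
      (Set.pi univ fun i : Fin N => if (i : ℕ) < n then univ else s i) := by
  ext p
  simp only [Set.mem_preimage, Set.mem_pi, Set.mem_univ, true_implies, Set.mem_prod, merge]
  constructor
  · intro h
    constructor <;> intro i <;> by_cases hi : (i : ℕ) < n <;> simpa [hi] using h i
  · rintro ⟨h1, h2⟩ i
    by_cases hi : (i : ℕ) < n
    · simpa [hi] using h1 i
    · simpa [hi] using h2 i

variable (μi : Fin N → Measure 𝒳) [∀ n, IsProbabilityMeasure (μi n)]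

lemma map_merge (n : ℕ) :
    Measure.map (merge n) ((Measure.pi μi).prod (Measure.pi μi)) = Measure.pi μi := by
  symm
  apply Measure.pi_eq
  intro s hs
  rw [Measure.map_apply (measurable_merge n) (MeasurableSet.univ_pi hs), merge_preimage,
    Measure.prod_prod, Measure.pi_pi, Measure.pi_pi, ← Finset.prod_mul_distrib]
  apply Finset.prod_congr rfl
  intro i _
  by_cases hi : (i : ℕ) < n <;> simp [hi]

lemma measurePreserving_merge (n : ℕ) :
    MeasurePreserving (merge n) ((Measure.pi μi).prod (Measure.pi μi)) (Measure.pi μi) :=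
  ⟨measurable_merge n, map_merge μi n⟩


/-- the pair (merged vector, the fresh copy of coordinate `k`) -/
def sub (k : Fin N) (p : (Fin N → 𝒳) × (Fin N → 𝒳)) : (Fin N → 𝒳) × 𝒳 :=
  (merge ((k : ℕ) + 1) p, p.2 k)

lemma measurable_sub (k : Fin N) : Measurable (sub (𝒳 := 𝒳) k) :=
  (measurable_merge _).prodMk ((measurable_pi_apply k).comp measurable_snd)

lemma sub_preimage (k : Fin N) (s : Fin N → Set 𝒳) (t : Set 𝒳) :
    sub k ⁻¹' (Set.pi univ s ×ˢ t) =
      (Set.pi univ fun i : Fin N => if (i : ℕ) < (k : ℕ) + 1 then s i else univ) ×ˢ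
      (Set.pi univ fun i : Fin N =>
        if (i : ℕ) < (k : ℕ) + 1 then (if i = k then t else univ) else s i) := by
  ext p
  simp only [Set.mem_preimage, Set.mem_pi, Set.mem_univ, true_implies, Set.mem_prod, sub, merge]
  constructor
  · rintro ⟨h1, h2⟩
    refine ⟨fun i => ?_, fun i => ?_⟩
    · by_cases hi : (i : ℕ) < (k : ℕ) + 1 <;> simpa [hi] using h1 i
    · by_cases hi : (i : ℕ) < (k : ℕ) + 1
      · by_cases hik : i = k
        · subst hik; simpa [hi] using h2
        · simp [hi, hik]
      · simpa [hi] using h1 i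
  · rintro ⟨h1, h2⟩
    constructor
    · intro i
      by_cases hi : (i : ℕ) < (k : ℕ) + 1
      · simpa [hi] using h1 i
      · simpa [hi] using h2 i
    · have := h2 k
      simpa [Nat.lt_succ_self] using this

variable (μi : Fin N → Measure 𝒳) [∀ n, IsProbabilityMeasure (μi n)]

lemma map_sub (k : Fin N) :
    Measure.map (sub k) ((Measure.pi μi).prod (Measure.pi μi))
      = (Measure.pi μi).prod (μi k) := by
  refine (Measure.prod_eq_generateFrom generateFrom_pi MeasurableSpace.generateFrom_measurableSet
    isPiSystem_pi MeasurableSpace.isPiSystem_measurableSet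
    (Measure.FiniteSpanningSetsIn.pi fun i => (μi i).toFiniteSpanningSetsIn)
    (μi k).toFiniteSpanningSetsIn ?_).symm
  rintro _ ⟨s, hs, rfl⟩ t ht
  simp only [Set.mem_pi, Set.mem_univ, true_implies, Set.mem_setOf_eq] at hs ht
  rw [Measure.map_apply (measurable_sub k)
      ((MeasurableSet.univ_pi hs).prod ht), sub_preimage,
    Measure.prod_prod, Measure.pi_pi, Measure.pi_pi, Measure.pi_pi,
    ← Finset.prod_mul_distrib]
  have : ∀ i : Fin N,
      (μi i) (if (i : ℕ) < (k : ℕ) + 1 then s i else univ) *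
        (μi i) (if (i : ℕ) < (k : ℕ) + 1 then (if i = k then t else univ) else s i)
      = (μi i) (s i) * (if i = k then (μi k) t else 1) := by
    intro i
    by_cases hik : i = k
    · subst hik; simp [Nat.lt_succ_self]
    · by_cases hi : (i : ℕ) < (k : ℕ) + 1 <;> simp [hi, hik, mul_comm]
  rw [Finset.prod_congr rfl fun i _ => this i, Finset.prod_mul_distrib]
  simp



lemma sq_integral_le {α : Type*} [MeasurableSpace α] {ν : Measure α} [IsProbabilityMeasure ν]
    {g : α → ℝ} (hg : Integrable g ν) (hg2 : Integrable (fun y => g y ^ 2) ν) :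
    (∫ y, g y ∂ν) ^ 2 ≤ ∫ y, g y ^ 2 ∂ν := by
  set c := ∫ y, g y ∂ν with hc
  have h0 : 0 ≤ ∫ y, (g y - c) ^ 2 ∂ν := integral_nonneg fun y => sq_nonneg _
  have hexp : (fun y => (g y - c) ^ 2) = fun y => g y ^ 2 - (2 * c) * g y + c ^ 2 := by
    funext y; ring
  have hint1 : Integrable (fun y => g y ^ 2 - 2 * c * g y) ν := hg2.sub (hg.const_mul _)
  rw [hexp, integral_add hint1 (integrable_const _),
    integral_sub hg2 (hg.const_mul _), MeasureTheory.integral_const_mul, integral_const] at h0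
  simp only [measure_univ, probReal_univ, ENNReal.toReal_one, one_smul, ← hc] at h0
  nlinarith [h0]

lemma integrable_mul_of_memL2 {α : Type*} [MeasurableSpace α] {ν : Measure α} {g h : α → ℝ}
    (hg : MemLp g 2 ν) (hh : MemLp h 2 ν) : Integrable (fun x => g x * h x) ν := by
  have hsmul : MemLp (g • h) 1 ν := haveI : ENNReal.HolderTriple 2 2 1 := ⟨by rw [ENNReal.inv_two_add_inv_two, inv_one]⟩
    hh.smul hg
  exact memLp_one_iff_integrable.mp hsmul

lemma measurePreserving_fst' {α β : Type*} [MeasurableSpace α] [MeasurableSpace β]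
    {μ : Measure α} {ν : Measure β} [SFinite μ] [IsProbabilityMeasure ν] :
    MeasurePreserving (Prod.fst : α × β → α) (μ.prod ν) μ :=
  ⟨measurable_fst, by simp [Measure.map_fst_prod]⟩


section Pointwise

variable {𝒳 : Type*} {N : ℕ}

lemma merge_self (p : (Fin N → 𝒳) × (Fin N → 𝒳)) : merge N p = p.1 :=
  funext fun i => if_pos i.2

lemma merge_zero' (p : (Fin N → 𝒳) × (Fin N → 𝒳)) : merge 0 p = p.2 :=
  funext fun i => if_neg (Nat.not_lt_zero _)

lemma merge_merge {t j : ℕ} (h : t ≤ j) (p : (Fin N → 𝒳) × (Fin N → 𝒳)) (z : Fin N → 𝒳) :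
    merge t (merge j p, z) = merge t (p.1, z) := by
  funext i
  by_cases hi : (i : ℕ) < t
  · simp [merge, hi, lt_of_lt_of_le hi h]
  · simp [merge, hi]

lemma update_merge (k : Fin N) (p : (Fin N → 𝒳) × (Fin N → 𝒳)) :
    Function.update (merge ((k : ℕ) + 1) p) k (p.2 k) = merge (k : ℕ) p := by
  funext i
  by_cases hik : i = k
  · subst hik
    simp [Function.update_self, merge]
  · rw [Function.update_of_ne hik]
    have hik' : (i : ℕ) ≠ (k : ℕ) := fun h => hik (Fin.ext h)
    by_cases hi : (i : ℕ) < (k : ℕ) + 1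
    · have h1 : (i : ℕ) < (k : ℕ) := lt_of_le_of_ne (Nat.lt_succ_iff.mp hi) hik'
      simp [merge, hi, h1]
    · have h2 : ¬ (i : ℕ) < (k : ℕ) := fun h => hi (h.trans (Nat.lt_succ_self _))
      simp [merge, hi, h2]

end Pointwise

section Hfun

variable {𝒳 : Type*} [MeasurableSpace 𝒳] {N : ℕ}
  (μi : Fin N → Measure 𝒳) [∀ n, IsProbabilityMeasure (μi n)]
  (f : (Fin N → 𝒳) → ℝ)

/-- integrate out the coordinates `≥ n` -/
noncomputable def hfun (n : ℕ) (x : Fin N → 𝒳) : ℝ :=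
  ∫ y, f (merge n (x, y)) ∂(Measure.pi μi)

lemma hfun_N (x : Fin N → 𝒳) : hfun μi f N x = f x := by
  simp only [hfun, merge_self]
  simp

lemma hfun_zero (x : Fin N → 𝒳) : hfun μi f 0 x = ∫ y, f y ∂(Measure.pi μi) := by
  simp only [hfun, merge_zero']

lemma hfun_merge {t j : ℕ} (h : t ≤ j) (p : (Fin N → 𝒳) × (Fin N → 𝒳)) :
    hfun μi f t (merge j p) = hfun μi f t p.1 := by
  simp only [hfun]
  congr 1
  funext z
  rw [show ((merge j p, z) : (Fin N → 𝒳) × (Fin N → 𝒳)) = (merge j p, z) from rfl,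
    merge_merge h p z]

lemma measurable_hfun (hf : Measurable f) (n : ℕ) : Measurable (hfun μi f n) := by
  have : StronglyMeasurable fun p : (Fin N → 𝒳) × (Fin N → 𝒳) => f (merge n p) :=
    (hf.comp (measurable_merge n)).stronglyMeasurable
  exact this.integral_prod_right'.measurable

lemma memL2_F (hf2 : MemLp f 2 (Measure.pi μi)) (n : ℕ) :
    MemLp (fun p : (Fin N → 𝒳) × (Fin N → 𝒳) => f (merge n p)) 2
      ((Measure.pi μi).prod (Measure.pi μi)) :=
  hf2.comp_measurePreserving (measurePreserving_merge μi n)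

lemma memL2_hfun (hf : Measurable f) (hf2 : MemLp f 2 (Measure.pi μi)) (n : ℕ) : MemLp (hfun μi f n) 2 (Measure.pi μi) := by
  have hFsm : AEStronglyMeasurable (fun p : (Fin N → 𝒳) × (Fin N → 𝒳) => f (merge n p))
      ((Measure.pi μi).prod (Measure.pi μi)) :=
    (hf.comp (measurable_merge n)).aestronglyMeasurable
  have hFsq : Integrable (fun p : (Fin N → 𝒳) × (Fin N → 𝒳) => f (merge n p) ^ 2)
      ((Measure.pi μi).prod (Measure.pi μi)) :=
    (memLp_two_iff_integrable_sq hFsm).mp (memL2_F μi f hf2 n)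
  have hFin : Integrable (fun p : (Fin N → 𝒳) × (Fin N → 𝒳) => f (merge n p))
      ((Measure.pi μi).prod (Measure.pi μi)) :=
    (memL2_F μi f hf2 n).integrable one_le_two
  have hW : Integrable (fun x => ∫ y, f (merge n (x, y)) ^ 2 ∂(Measure.pi μi))
      (Measure.pi μi) := hFsq.integral_prod_left
  have hsm : AEStronglyMeasurable (hfun μi f n) (Measure.pi μi) :=
    (measurable_hfun μi f hf n).aestronglyMeasurable
  rw [memLp_two_iff_integrable_sq hsm]
  apply hW.mono' ((measurable_hfun μi f hf n).pow_const 2).aestronglyMeasurable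
  filter_upwards [hFsq.prod_right_ae, hFin.prod_right_ae] with x h2 h1
  have hj := sq_integral_le h1 h2
  rw [Real.norm_eq_abs, abs_of_nonneg (sq_nonneg _)]
  exact hj

lemma integral_mul_hfun (hf : Measurable f) (hf2 : MemLp f 2 (Measure.pi μi)) {g : (Fin N → 𝒳) → ℝ} (hg : Measurable g)
    (hg2 : MemLp g 2 (Measure.pi μi)) {n : ℕ}
    (hgn : ∀ p : (Fin N → 𝒳) × (Fin N → 𝒳), g (merge n p) = g p.1) :
    ∫ x, g x * hfun μi f n x ∂(Measure.pi μi) = ∫ x, g x * f x ∂(Measure.pi μi) := by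
  have hgfst : MemLp (fun p : (Fin N → 𝒳) × (Fin N → 𝒳) => g p.1) 2
      ((Measure.pi μi).prod (Measure.pi μi)) :=
    hg2.comp_measurePreserving measurePreserving_fst'
  have hI : Integrable (fun p : (Fin N → 𝒳) × (Fin N → 𝒳) => g p.1 * f (merge n p))
      ((Measure.pi μi).prod (Measure.pi μi)) :=
    integrable_mul_of_memL2 hgfst (memL2_F μi f hf2 n)
  have step1 : ∫ x, g x * hfun μi f n x ∂(Measure.pi μi)
      = ∫ x, ∫ y, g x * f (merge n (x, y)) ∂(Measure.pi μi) ∂(Measure.pi μi) := by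
    apply integral_congr_ae
    filter_upwards with x
    exact (MeasureTheory.integral_const_mul _ _).symm
  have step2 : ∫ x, ∫ y, g x * f (merge n (x, y)) ∂(Measure.pi μi) ∂(Measure.pi μi)
      = ∫ p : (Fin N → 𝒳) × (Fin N → 𝒳), g p.1 * f (merge n p)
          ∂((Measure.pi μi).prod (Measure.pi μi)) := integral_integral hI
  have step3 : ∫ p : (Fin N → 𝒳) × (Fin N → 𝒳), g p.1 * f (merge n p)
          ∂((Measure.pi μi).prod (Measure.pi μi))
      = ∫ p : (Fin N → 𝒳) × (Fin N → 𝒳), ((fun x => g x * f x) ∘ merge n) p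
          ∂((Measure.pi μi).prod (Measure.pi μi)) := by
    apply integral_congr_ae
    filter_upwards with p
    simp only [Function.comp_apply, hgn p]
  have step4 : ∫ p : (Fin N → 𝒳) × (Fin N → 𝒳), ((fun x => g x * f x) ∘ merge n) p
          ∂((Measure.pi μi).prod (Measure.pi μi))
      = ∫ x, g x * f x ∂(Measure.pi μi) := by
    have h1 : ∫ p : (Fin N → 𝒳) × (Fin N → 𝒳), ((fun x => g x * f x) ∘ merge n) p
          ∂((Measure.pi μi).prod (Measure.pi μi))
        = ∫ x, g x * f x ∂(Measure.map (merge n) ((Measure.pi μi).prod (Measure.pi μi))) :=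
      (integral_map (measurable_merge n).aemeasurable
        (hg.mul hf).aestronglyMeasurable).symm
    rw [h1, map_merge]
  rw [step1, step2, step3, step4]

end Hfun

section Core

variable {𝒳 : Type*} [MeasurableSpace 𝒳] {N : ℕ}

theorem core (μi : Fin N → Measure 𝒳) [∀ n, IsProbabilityMeasure (μi n)]
    (f : (Fin N → 𝒳) → ℝ) (hf : Measurable f) (hf2 : MemLp f 2 (Measure.pi μi)) :
    ∫ x, (f x - ∫ x', f x' ∂(Measure.pi μi)) ^ 2 ∂(Measure.pi μi)
      ≤ ∑ k : Fin N, ∫ q : (Fin N → 𝒳) × 𝒳,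
          (f q.1 - f (Function.update q.1 k q.2)) ^ 2 ∂((Measure.pi μi).prod (μi k)) := by
  set Δ : ℕ → (Fin N → 𝒳) → ℝ := fun n x => hfun μi f (n + 1) x - hfun μi f n x with hΔdef
  have hΔmeas : ∀ n, Measurable (Δ n) := fun n =>
    (measurable_hfun μi f hf (n + 1)).sub (measurable_hfun μi f hf n)
  have hΔ2 : ∀ n, MemLp (Δ n) 2 (Measure.pi μi) := fun n =>
    (memL2_hfun μi f hf hf2 (n + 1)).sub (memL2_hfun μi f hf hf2 n)
  -- orthogonality of increments
  have horth : ∀ m n : ℕ, m < n →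
      ∫ x, Δ m x * Δ n x ∂(Measure.pi μi) = 0 := by
    intro m n hmn
    have hmerge : ∀ t : ℕ, m + 1 ≤ t → ∀ p : (Fin N → 𝒳) × (Fin N → 𝒳),
        Δ m (merge t p) = Δ m p.1 := by
      intro t ht p
      simp only [hΔdef]
      rw [hfun_merge μi f ht p, hfun_merge μi f (le_trans (Nat.le_succ m) ht) p]
    have int1 : Integrable (fun x => Δ m x * hfun μi f (n + 1) x) (Measure.pi μi) :=
      integrable_mul_of_memL2 (hΔ2 m) (memL2_hfun μi f hf hf2 (n + 1))
    have int2 : Integrable (fun x => Δ m x * hfun μi f n x) (Measure.pi μi) :=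
      integrable_mul_of_memL2 (hΔ2 m) (memL2_hfun μi f hf hf2 n)
    have e1 : ∫ x, Δ m x * hfun μi f (n + 1) x ∂(Measure.pi μi)
        = ∫ x, Δ m x * f x ∂(Measure.pi μi) :=
      integral_mul_hfun μi f hf hf2 (hΔmeas m) (hΔ2 m) (hmerge (n + 1) (by omega))
    have e2 : ∫ x, Δ m x * hfun μi f n x ∂(Measure.pi μi)
        = ∫ x, Δ m x * f x ∂(Measure.pi μi) :=
      integral_mul_hfun μi f hf hf2 (hΔmeas m) (hΔ2 m) (hmerge n (by omega))
    have : ∫ x, Δ m x * Δ n x ∂(Measure.pi μi)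
        = ∫ x, Δ m x * hfun μi f (n + 1) x ∂(Measure.pi μi)
          - ∫ x, Δ m x * hfun μi f n x ∂(Measure.pi μi) := by
      rw [← integral_sub int1 int2]
      apply integral_congr_ae
      filter_upwards with x
      simp only [hΔdef]
      ring
    rw [this, e1, e2, sub_self]
  have hprodint : ∀ m n : ℕ, Integrable (fun x => Δ m x * Δ n x) (Measure.pi μi) :=
    fun m n => integrable_mul_of_memL2 (hΔ2 m) (hΔ2 n)
  -- expansion of the square of the telescoping sum
  have hexp : ∫ x, (∑ n ∈ Finset.range N, Δ n x) ^ 2 ∂(Measure.pi μi)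
      = ∑ n ∈ Finset.range N, ∫ x, Δ n x ^ 2 ∂(Measure.pi μi) := by
    have e1 : ∫ x, (∑ n ∈ Finset.range N, Δ n x) ^ 2 ∂(Measure.pi μi)
        = ∫ x, ∑ m ∈ Finset.range N, ∑ n ∈ Finset.range N, Δ m x * Δ n x ∂(Measure.pi μi) := by
      apply integral_congr_ae
      filter_upwards with x
      rw [sq, Finset.sum_mul_sum]
    rw [e1, integral_finset_sum _ (fun m _ => integrable_finset_sum _ fun n _ => hprodint m n)]
    apply Finset.sum_congr rfl
    intro m hm
    rw [integral_finset_sum _ fun n _ => hprodint m n, Finset.sum_eq_single m]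
    · apply integral_congr_ae
      filter_upwards with x
      rw [sq]
    · intro n hn hne
      rcases lt_or_gt_of_ne hne with h | h
    -- n < m or m < n
      · rw [show (fun x => Δ m x * Δ n x) = fun x => Δ n x * Δ m x from funext fun x => mul_comm _ _]
        exact horth n m h
      · exact horth m n h
    · intro h; exact absurd hm h
  -- bound on each diagonal term
  have hbound : ∀ k : Fin N,
      ∫ x, Δ (k : ℕ) x ^ 2 ∂(Measure.pi μi)
        ≤ ∫ q : (Fin N → 𝒳) × 𝒳,
            (f q.1 - f (Function.update q.1 k q.2)) ^ 2 ∂((Measure.pi μi).prod (μi k)) := by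
    intro k
    have hDmeas : Measurable fun p : (Fin N → 𝒳) × (Fin N → 𝒳) =>
        f (merge ((k : ℕ) + 1) p) - f (merge (k : ℕ) p) :=
      (hf.comp (measurable_merge _)).sub (hf.comp (measurable_merge _))
    have hD2 : MemLp (fun p : (Fin N → 𝒳) × (Fin N → 𝒳) =>
        f (merge ((k : ℕ) + 1) p) - f (merge (k : ℕ) p)) 2
        ((Measure.pi μi).prod (Measure.pi μi)) :=
      (memL2_F μi f hf2 ((k : ℕ) + 1)).sub (memL2_F μi f hf2 (k : ℕ))
    have hDsq : Integrable (fun p : (Fin N → 𝒳) × (Fin N → 𝒳) =>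
        (f (merge ((k : ℕ) + 1) p) - f (merge (k : ℕ) p)) ^ 2)
        ((Measure.pi μi).prod (Measure.pi μi)) :=
      (memLp_two_iff_integrable_sq hDmeas.aestronglyMeasurable).mp hD2
    have hFin1 : Integrable (fun p : (Fin N → 𝒳) × (Fin N → 𝒳) => f (merge ((k : ℕ) + 1) p))
        ((Measure.pi μi).prod (Measure.pi μi)) :=
      (memL2_F μi f hf2 _).integrable one_le_two
    have hFin0 : Integrable (fun p : (Fin N → 𝒳) × (Fin N → 𝒳) => f (merge (k : ℕ) p))
        ((Measure.pi μi).prod (Measure.pi μi)) :=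
      (memL2_F μi f hf2 _).integrable one_le_two
    have hW : Integrable (fun x => ∫ y,
        (f (merge ((k : ℕ) + 1) (x, y)) - f (merge (k : ℕ) (x, y))) ^ 2 ∂(Measure.pi μi))
        (Measure.pi μi) := hDsq.integral_prod_left
    have hΔsq : Integrable (fun x => Δ (k : ℕ) x ^ 2) (Measure.pi μi) :=
      (memLp_two_iff_integrable_sq (hΔmeas _).aestronglyMeasurable).mp (hΔ2 _)
    have hae : ∀ᵐ x ∂(Measure.pi μi), Δ (k : ℕ) x ^ 2 ≤ ∫ y,
        (f (merge ((k : ℕ) + 1) (x, y)) - f (merge (k : ℕ) (x, y))) ^ 2 ∂(Measure.pi μi) := by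
      filter_upwards [hFin1.prod_right_ae, hFin0.prod_right_ae, hDsq.prod_right_ae]
        with x h1 h0 h2
      have hdx : Δ (k : ℕ) x = ∫ y,
          (f (merge ((k : ℕ) + 1) (x, y)) - f (merge (k : ℕ) (x, y))) ∂(Measure.pi μi) := by
        simp only [hΔdef, hfun]
        rw [integral_sub h1 h0]
      rw [hdx]
      exact sq_integral_le (h1.sub h0) h2
    have step1 : ∫ x, Δ (k : ℕ) x ^ 2 ∂(Measure.pi μi) ≤ ∫ x, ∫ y,
        (f (merge ((k : ℕ) + 1) (x, y)) - f (merge (k : ℕ) (x, y))) ^ 2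
          ∂(Measure.pi μi) ∂(Measure.pi μi) :=
      integral_mono_ae hΔsq hW hae
    have step2 : ∫ x, ∫ y,
        (f (merge ((k : ℕ) + 1) (x, y)) - f (merge (k : ℕ) (x, y))) ^ 2
          ∂(Measure.pi μi) ∂(Measure.pi μi)
        = ∫ p : (Fin N → 𝒳) × (Fin N → 𝒳),
            (f (merge ((k : ℕ) + 1) p) - f (merge (k : ℕ) p)) ^ 2
            ∂((Measure.pi μi).prod (Measure.pi μi)) := integral_integral hDsq
    have hGmeas : Measurable fun q : (Fin N → 𝒳) × 𝒳 =>
        (f q.1 - f (Function.update q.1 k q.2)) ^ 2 :=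
      ((hf.comp measurable_fst).sub (hf.comp measurable_update')).pow_const 2
    have step3 : ∫ p : (Fin N → 𝒳) × (Fin N → 𝒳),
            (f (merge ((k : ℕ) + 1) p) - f (merge (k : ℕ) p)) ^ 2
            ∂((Measure.pi μi).prod (Measure.pi μi))
        = ∫ p : (Fin N → 𝒳) × (Fin N → 𝒳),
            ((fun q : (Fin N → 𝒳) × 𝒳 => (f q.1 - f (Function.update q.1 k q.2)) ^ 2) ∘ sub k) p
            ∂((Measure.pi μi).prod (Measure.pi μi)) := by
      apply integral_congr_ae
      filter_upwards with p
      simp only [Function.comp_apply, sub, update_merge k p]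
    have step4 : ∫ p : (Fin N → 𝒳) × (Fin N → 𝒳),
            ((fun q : (Fin N → 𝒳) × 𝒳 => (f q.1 - f (Function.update q.1 k q.2)) ^ 2) ∘ sub k) p
            ∂((Measure.pi μi).prod (Measure.pi μi))
        = ∫ q : (Fin N → 𝒳) × 𝒳,
            (f q.1 - f (Function.update q.1 k q.2)) ^ 2 ∂((Measure.pi μi).prod (μi k)) := by
      have h1 : ∫ p : (Fin N → 𝒳) × (Fin N → 𝒳),
            ((fun q : (Fin N → 𝒳) × 𝒳 => (f q.1 - f (Function.update q.1 k q.2)) ^ 2) ∘ sub k) p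
            ∂((Measure.pi μi).prod (Measure.pi μi))
          = ∫ q : (Fin N → 𝒳) × 𝒳, (f q.1 - f (Function.update q.1 k q.2)) ^ 2
              ∂(Measure.map (sub k) ((Measure.pi μi).prod (Measure.pi μi))) :=
        (integral_map (measurable_sub k).aemeasurable hGmeas.aestronglyMeasurable).symm
      rw [h1, map_sub]
    rw [step2, step3, step4] at step1
    exact step1
  -- telescoping
  have hc : ∀ x, ∑ n ∈ Finset.range N, Δ n x = f x - ∫ x', f x' ∂(Measure.pi μi) := by
    intro x
    simp only [hΔdef]
    rw [Finset.sum_range_sub (fun n => hfun μi f n x), hfun_N, hfun_zero]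
  calc ∫ x, (f x - ∫ x', f x' ∂(Measure.pi μi)) ^ 2 ∂(Measure.pi μi)
      = ∫ x, (∑ n ∈ Finset.range N, Δ n x) ^ 2 ∂(Measure.pi μi) := by
        apply integral_congr_ae
        filter_upwards with x
        rw [hc x]
    _ = ∑ n ∈ Finset.range N, ∫ x, Δ n x ^ 2 ∂(Measure.pi μi) := hexp
    _ = ∑ k : Fin N, ∫ x, Δ (k : ℕ) x ^ 2 ∂(Measure.pi μi) :=
        (Fin.sum_univ_eq_sum_range (fun n => ∫ x, Δ n x ^ 2 ∂(Measure.pi μi)) N).symm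
    _ ≤ ∑ k : Fin N, ∫ q : (Fin N → 𝒳) × 𝒳,
          (f q.1 - f (Function.update q.1 k q.2)) ^ 2 ∂((Measure.pi μi).prod (μi k)) :=
        Finset.sum_le_sum fun k _ => hbound k

end Core

lemma posneg_sq (a : ℝ) : (a ⊔ 0) ^ 2 + ((-a) ⊔ 0) ^ 2 = a ^ 2 := by
  rcases le_total a 0 with h | h
  · rw [sup_eq_right.mpr h, sup_eq_left.mpr (neg_nonneg.mpr h)]
    ring
  · rw [sup_eq_left.mpr h, sup_eq_right.mpr (neg_nonpos.mpr h)]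
    ring

lemma map_joint {𝒳 : Type*} [MeasurableSpace 𝒳] {N : ℕ} {Ω : Type*} [MeasurableSpace Ω]
    (P : Measure Ω) [IsProbabilityMeasure P] (X : Fin N → Ω → 𝒳) (hX : ∀ n, Measurable (X n))
    (hindep : iIndepFun X P) :
    Measure.map (fun ω n => X n ω) P = Measure.pi (fun n => Measure.map (X n) P) := by
  haveI : ∀ n, IsProbabilityMeasure (Measure.map (X n) P) :=
    fun n => Measure.isProbabilityMeasure_map (hX n).aemeasurable
  symm
  apply Measure.pi_eq
  intro s hs
  rw [Measure.map_apply (measurable_pi_lambda _ fun n => hX n) (MeasurableSet.univ_pi hs)]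
  have hpre : (fun ω n => X n ω) ⁻¹' Set.pi univ s = ⋂ n ∈ Finset.univ, X n ⁻¹' s n := by
    ext ω; simp
  rw [hpre, hindep.measure_inter_preimage_eq_mul Finset.univ (fun n _ => hs n)]
  exact Finset.prod_congr rfl fun n _ => (Measure.map_apply (hX n) (hs n)).symm

lemma sup_zero_sq_le (a : ℝ) : (a ⊔ 0) ^ 2 ≤ a ^ 2 := by
  rcases le_total a 0 with h | h
  · rw [sup_eq_right.mpr h]
    simpa using sq_nonneg a
  · rw [sup_eq_left.mpr h]

lemma sup_zero_sq_le_rev (a b : ℝ) : ((b - a) ⊔ 0) ^ 2 ≤ (a - b) ^ 2 := by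
  have h := sup_zero_sq_le (b - a)
  calc ((b - a) ⊔ 0) ^ 2 ≤ (b - a) ^ 2 := h
    _ = (a - b) ^ 2 := by ring

end EfronSteinAux

open EfronSteinAux

/-- The Efron–Stein inequality: for `Z = f(X₁,…,X_N)` with independent `X_n` and
independent copies `X'_n`,
`Var(Z) ≤ E[V₊] + E[V₋]` and `Var(Z) ≤ Σₙ E[(Z − Z'ₙ)²]`, where
`V₊ = Σₙ E'[(Z − Z'ₙ)₊²]`, `V₋ = Σₙ E'[(Z − Z'ₙ)₋²]`. -/
theorem stmt9 {Ω Ω' : Type*} [MeasurableSpace Ω] [MeasurableSpace Ω']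
    (P : Measure Ω) (P' : Measure Ω')
    [IsProbabilityMeasure P] [IsProbabilityMeasure P']
    {𝒳 : Type*} [MeasurableSpace 𝒳] (N : ℕ)
    (X : Fin N → Ω → 𝒳) (X' : Fin N → Ω' → 𝒳)
    (hX : ∀ n, Measurable (X n)) (hX' : ∀ n, Measurable (X' n))
    (hindep : iIndepFun X P)
    (hindep' : iIndepFun X' P')
    (hcopy : ∀ n, Measure.map (X n) P = Measure.map (X' n) P')
    (f : (Fin N → 𝒳) → ℝ) (hf : Measurable f)
    (hsq : Integrable (fun ω => (f (fun n => X n ω)) ^ 2) P)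
    (hsq' : ∀ n, Integrable
      (fun p : Ω × Ω' =>
        (f (fun m => X m p.1) - f (Function.update (fun m => X m p.1) n (X' n p.2))) ^ 2)
      (P.prod P')) :
    (∫ ω, (f (fun n => X n ω) - ∫ ω₂, f (fun n => X n ω₂) ∂P) ^ 2 ∂P
        ≤ (∫ ω, ∑ n, ∫ ω', ((f (fun m => X m ω)
              - f (Function.update (fun m => X m ω) n (X' n ω'))) ⊔ 0) ^ 2 ∂P' ∂P)
          + ∫ ω, ∑ n, ∫ ω', ((f (Function.update (fun m => X m ω) n (X' n ω'))
              - f (fun m => X m ω)) ⊔ 0) ^ 2 ∂P' ∂P) ∧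
      ∫ ω, (f (fun n => X n ω) - ∫ ω₂, f (fun n => X n ω₂) ∂P) ^ 2 ∂P
        ≤ ∑ n, ∫ p : Ω × Ω',
            (f (fun m => X m p.1)
              - f (Function.update (fun m => X m p.1) n (X' n p.2))) ^ 2 ∂(P.prod P') := by
  have hXvm : Measurable (fun ω => fun n => X n ω : Ω → Fin N → 𝒳) :=
    measurable_pi_lambda _ fun n => hX n
  haveI : ∀ n, IsProbabilityMeasure (Measure.map (X n) P) :=
    fun n => Measure.isProbabilityMeasure_map (hX n).aemeasurable
  have hmap : Measure.map (fun ω n => X n ω) P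
      = Measure.pi (fun n => Measure.map (X n) P) := map_joint P X hX hindep
  -- L² on the canonical space
  have hf2 : MemLp f 2 (Measure.pi (fun n => Measure.map (X n) P)) := by
    rw [← hmap, memLp_two_iff_integrable_sq hf.aestronglyMeasurable,
      integrable_map_measure ((hf.pow_const 2).aestronglyMeasurable) hXvm.aemeasurable]
    exact hsq
  -- transfer of the left-hand side
  have hc : ∫ ω₂, f (fun n => X n ω₂) ∂P
      = ∫ x, f x ∂(Measure.pi (fun n => Measure.map (X n) P)) := by
    rw [← hmap, integral_map hXvm.aemeasurable hf.aestronglyMeasurable]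
  have hLHS : ∫ ω, (f (fun n => X n ω) - ∫ ω₂, f (fun n => X n ω₂) ∂P) ^ 2 ∂P
      = ∫ x, (f x - ∫ x', f x' ∂(Measure.pi (fun n => Measure.map (X n) P))) ^ 2
          ∂(Measure.pi (fun n => Measure.map (X n) P)) := by
    rw [hc, ← hmap, integral_map (f := fun x =>
        (f x - ∫ x', f x' ∂(Measure.map (fun ω n => X n ω) P)) ^ 2) hXvm.aemeasurable
      ((hf.sub measurable_const).pow_const 2).aestronglyMeasurable]
  -- transfer of the right-hand side terms
  have hterm : ∀ n : Fin N,
      ∫ q : (Fin N → 𝒳) × 𝒳, (f q.1 - f (Function.update q.1 n q.2)) ^ 2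
          ∂((Measure.pi (fun m => Measure.map (X m) P)).prod (Measure.map (X n) P))
      = ∫ p : Ω × Ω', (f (fun m => X m p.1)
          - f (Function.update (fun m => X m p.1) n (X' n p.2))) ^ 2 ∂(P.prod P') := by
    intro n
    have hGmeas : Measurable fun q : (Fin N → 𝒳) × 𝒳 =>
        (f q.1 - f (Function.update q.1 n q.2)) ^ 2 :=
      ((hf.comp measurable_fst).sub (hf.comp measurable_update')).pow_const 2
    have hmm : (Measure.pi (fun m => Measure.map (X m) P)).prod (Measure.map (X n) P)
        = Measure.map (Prod.map (fun ω m => X m ω) (X' n)) (P.prod P') := by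
      rw [← hmap, hcopy n, Measure.map_prod_map _ _ hXvm (hX' n)]
    rw [hmm, integral_map (hXvm.prodMap (hX' n)).aemeasurable hGmeas.aestronglyMeasurable]
    rfl
  -- the second (Efron–Stein) inequality
  have key : ∫ ω, (f (fun n => X n ω) - ∫ ω₂, f (fun n => X n ω₂) ∂P) ^ 2 ∂P
      ≤ ∑ n, ∫ p : Ω × Ω',
          (f (fun m => X m p.1)
            - f (Function.update (fun m => X m p.1) n (X' n p.2))) ^ 2 ∂(P.prod P') := by
    rw [hLHS]
    calc ∫ x, (f x - ∫ x', f x' ∂(Measure.pi (fun n => Measure.map (X n) P))) ^ 2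
          ∂(Measure.pi (fun n => Measure.map (X n) P))
        ≤ ∑ k : Fin N, ∫ q : (Fin N → 𝒳) × 𝒳, (f q.1 - f (Function.update q.1 k q.2)) ^ 2
            ∂((Measure.pi (fun m => Measure.map (X m) P)).prod (Measure.map (X k) P)) :=
          core (fun n => Measure.map (X n) P) f hf hf2
      _ = ∑ n, ∫ p : Ω × Ω', (f (fun m => X m p.1)
            - f (Function.update (fun m => X m p.1) n (X' n p.2))) ^ 2 ∂(P.prod P') :=
          Finset.sum_congr rfl fun n _ => hterm n
  refine ⟨?_, key⟩
  -- the first inequality: the two half-sums add up to the right-hand side of `key`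
  have Hae : ∀ᵐ ω ∂P, ∀ n : Fin N, Integrable (fun ω' =>
      (f (fun m => X m ω) - f (Function.update (fun m => X m ω) n (X' n ω'))) ^ 2) P' :=
    ae_all_iff.mpr fun n => (hsq' n).prod_right_ae
  have hDmeas : ∀ n : Fin N, Measurable fun p : Ω × Ω' =>
      f (fun m => X m p.1) - f (Function.update (fun m => X m p.1) n (X' n p.2)) := by
    intro n
    exact (hf.comp (hXvm.comp measurable_fst)).sub
      (hf.comp (measurable_update'.comp
        ((hXvm.comp measurable_fst).prodMk ((hX' n).comp measurable_snd))))
  have hupd_meas : ∀ (ω : Ω) (n : Fin N), Measurable fun ω' : Ω' =>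
      f (Function.update (fun m => X m ω) n (X' n ω')) := fun ω n =>
    hf.comp (measurable_update'.comp (measurable_const.prodMk (hX' n)))
  -- slice-wise integrability of the positive and negative parts
  have hpos_int : ∀ (ω : Ω) (n : Fin N), Integrable (fun ω' =>
      (f (fun m => X m ω) - f (Function.update (fun m => X m ω) n (X' n ω'))) ^ 2) P' →
      Integrable (fun ω' => ((f (fun m => X m ω)
        - f (Function.update (fun m => X m ω) n (X' n ω'))) ⊔ 0) ^ 2) P' := by
    intro ω n hint
    apply hint.mono' (((measurable_const.sub (hupd_meas ω n)).sup
      measurable_const).pow_const 2).aestronglyMeasurable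
    filter_upwards with ω'
    rw [Real.norm_eq_abs, abs_of_nonneg (sq_nonneg _)]
    exact sup_zero_sq_le _
  have hneg_int : ∀ (ω : Ω) (n : Fin N), Integrable (fun ω' =>
      (f (fun m => X m ω) - f (Function.update (fun m => X m ω) n (X' n ω'))) ^ 2) P' →
      Integrable (fun ω' => ((f (Function.update (fun m => X m ω) n (X' n ω'))
        - f (fun m => X m ω)) ⊔ 0) ^ 2) P' := by
    intro ω n hint
    apply hint.mono' ((((hupd_meas ω n).sub measurable_const).sup
      measurable_const).pow_const 2).aestronglyMeasurable
    filter_upwards with ω'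
    rw [Real.norm_eq_abs, abs_of_nonneg (sq_nonneg _)]
    exact sup_zero_sq_le_rev _ _
  -- a.e. pointwise identity for the two half-sums
  have hABsum : ∀ᵐ ω ∂P,
      (∑ n : Fin N, ∫ ω', ((f (fun m => X m ω)
          - f (Function.update (fun m => X m ω) n (X' n ω'))) ⊔ 0) ^ 2 ∂P')
        + (∑ n : Fin N, ∫ ω', ((f (Function.update (fun m => X m ω) n (X' n ω'))
          - f (fun m => X m ω)) ⊔ 0) ^ 2 ∂P')
      = ∑ n : Fin N, ∫ ω', (f (fun m => X m ω)
          - f (Function.update (fun m => X m ω) n (X' n ω'))) ^ 2 ∂P' := by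
    filter_upwards [Hae] with ω hω
    rw [← Finset.sum_add_distrib]
    apply Finset.sum_congr rfl
    intro n _
    rw [← integral_add (hpos_int ω n (hω n)) (hneg_int ω n (hω n))]
    apply integral_congr_ae
    filter_upwards with ω'
    have := posneg_sq (f (fun m => X m ω) - f (Function.update (fun m => X m ω) n (X' n ω')))
    rw [neg_sub] at this
    exact this
  -- integrability of the two half-sums
  have hbig : Integrable (fun ω => ∑ n : Fin N, ∫ ω', (f (fun m => X m ω)
      - f (Function.update (fun m => X m ω) n (X' n ω'))) ^ 2 ∂P') P :=
    integrable_finset_sum _ fun n _ => (hsq' n).integral_prod_left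
  have hsmA : ∀ n : Fin N, StronglyMeasurable fun ω => ∫ ω', ((f (fun m => X m ω)
      - f (Function.update (fun m => X m ω) n (X' n ω'))) ⊔ 0) ^ 2 ∂P' := by
    intro n
    exact (((hDmeas n).sup measurable_const).pow_const 2).stronglyMeasurable.integral_prod_right'
  have hsmB : ∀ n : Fin N, StronglyMeasurable fun ω => ∫ ω', ((f (Function.update
      (fun m => X m ω) n (X' n ω')) - f (fun m => X m ω)) ⊔ 0) ^ 2 ∂P' := by
    intro n
    have hu : Measurable fun p : Ω × Ω' =>
        f (Function.update (fun m => X m p.1) n (X' n p.2)) :=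
      hf.comp (measurable_update'.comp
        ((hXvm.comp measurable_fst).prodMk ((hX' n).comp measurable_snd)))
    have hz : Measurable fun p : Ω × Ω' => f (fun m => X m p.1) :=
      hf.comp (hXvm.comp measurable_fst)
    exact (((hu.sub hz).sup measurable_const).pow_const 2).stronglyMeasurable.integral_prod_right'
  have hgA_int : Integrable (fun ω => ∑ n : Fin N, ∫ ω', ((f (fun m => X m ω)
      - f (Function.update (fun m => X m ω) n (X' n ω'))) ⊔ 0) ^ 2 ∂P') P := by
    apply hbig.mono'
      (Finset.measurable_sum _ fun n _ => (hsmA n).measurable).aestronglyMeasurable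
    filter_upwards [Hae] with ω hω
    rw [Real.norm_eq_abs,
      abs_of_nonneg (Finset.sum_nonneg fun n _ => integral_nonneg fun ω' => sq_nonneg _)]
    apply Finset.sum_le_sum
    intro n _
    exact integral_mono (hpos_int ω n (hω n)) (hω n) fun ω' => sup_zero_sq_le _
  have hgB_int : Integrable (fun ω => ∑ n : Fin N, ∫ ω', ((f (Function.update
      (fun m => X m ω) n (X' n ω')) - f (fun m => X m ω)) ⊔ 0) ^ 2 ∂P') P := by
    apply hbig.mono'
      (Finset.measurable_sum _ fun n _ => (hsmB n).measurable).aestronglyMeasurable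
    filter_upwards [Hae] with ω hω
    rw [Real.norm_eq_abs,
      abs_of_nonneg (Finset.sum_nonneg fun n _ => integral_nonneg fun ω' => sq_nonneg _)]
    apply Finset.sum_le_sum
    intro n _
    exact integral_mono (hneg_int ω n (hω n)) (hω n) fun ω' => sup_zero_sq_le_rev _ _
  have hsum : (∫ ω, ∑ n : Fin N, ∫ ω', ((f (fun m => X m ω)
        - f (Function.update (fun m => X m ω) n (X' n ω'))) ⊔ 0) ^ 2 ∂P' ∂P)
      + (∫ ω, ∑ n : Fin N, ∫ ω', ((f (Function.update (fun m => X m ω) n (X' n ω'))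
        - f (fun m => X m ω)) ⊔ 0) ^ 2 ∂P' ∂P)
      = ∑ n : Fin N, ∫ p : Ω × Ω', (f (fun m => X m p.1)
          - f (Function.update (fun m => X m p.1) n (X' n p.2))) ^ 2 ∂(P.prod P') := by
    rw [← integral_add hgA_int hgB_int]
    calc ∫ ω, ((∑ n : Fin N, ∫ ω', ((f (fun m => X m ω)
            - f (Function.update (fun m => X m ω) n (X' n ω'))) ⊔ 0) ^ 2 ∂P')
          + ∑ n : Fin N, ∫ ω', ((f (Function.update (fun m => X m ω) n (X' n ω'))
            - f (fun m => X m ω)) ⊔ 0) ^ 2 ∂P') ∂P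
        = ∫ ω, ∑ n : Fin N, ∫ ω', (f (fun m => X m ω)
            - f (Function.update (fun m => X m ω) n (X' n ω'))) ^ 2 ∂P' ∂P :=
          integral_congr_ae hABsum
      _ = ∑ n : Fin N, ∫ ω, ∫ ω', (f (fun m => X m ω)
            - f (Function.update (fun m => X m ω) n (X' n ω'))) ^ 2 ∂P' ∂P :=
          integral_finset_sum _ fun n _ => (hsq' n).integral_prod_left
      _ = ∑ n : Fin N, ∫ p : Ω × Ω', (f (fun m => X m p.1)
            - f (Function.update (fun m => X m p.1) n (X' n p.2))) ^ 2 ∂(P.prod P') :=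
          Finset.sum_congr rfl fun n _ => integral_integral (hsq' n)
  rw [hsum]
  exact key
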